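/- Let p ≤ 1 with p ∉ {0, −1}, and let f : (0,∞) → (0,∞) be continuously differentiable, strictly increasing and convex, such that the function x ↦ f(x)^{p−1} · f'(x) is increasing. Then for all distinct x, y ∈ (0,∞), J_p(f(x), f(y)) ≥ f(J_p(x, y)). -/

import Mathlib

open Set

/-- The Alzer mean `J_p(a,b) = (p/(p+1)) * (a^(p+1) - b^(p+1))/(a^p - b^p)`
of distinct positive reals `a`, `b`, for `p ∉ {0, -1}`. -/
noncomputable def alzer (p a b : ℝ) : ℝ :=
  (p / (p + 1)) * ((a ^ (p + 1) - b ^ (p + 1)) / (a ^ p - b ^ p))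

lemma alzer_comm (p a b : ℝ) : alzer p a b = alzer p b a := by
  unfold alzer
  rw [show a ^ (p+1) - b ^ (p+1) = -(b ^ (p+1) - a ^ (p+1)) by ring,
    show a ^ p - b ^ p = -(b ^ p - a ^ p) by ring, neg_div_neg_eq]

set_option maxHeartbeats 2000000 in
open intervalIntegral in
lemma alzer_key (p : ℝ) (hp1 : p ≤ 1) (hp0 : p ≠ 0) (hpm : p ≠ -1)
    (f : ℝ → ℝ)
    (hpos : ∀ x ∈ Ioi (0 : ℝ), 0 < f x)
    (hder : ContDiffOn ℝ 1 f (Ioi 0))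
    (hmono : StrictMonoOn f (Ioi 0))
    (hconv : ConvexOn ℝ (Ioi 0) f)
    (hinc : MonotoneOn (fun x => f x ^ (p - 1) * deriv f x) (Ioi 0))
    (x y : ℝ) (hy : 0 < y) (hxy : y < x) :
    alzer p (f x) (f y) ≥ f (alzer p x y) := by
  have hx : 0 < x := hy.trans hxy
  have hp1' : p + 1 ≠ 0 := fun h => hpm (by linarith)
  have hIcc : Icc y x ⊆ Ioi (0:ℝ) := fun t ht => lt_of_lt_of_le hy ht.1
  have huIcc : Set.uIcc y x = Icc y x := uIcc_of_le hxy.le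
  have h0 : (0:ℝ) ∉ Set.uIcc y x := by
    rw [huIcc]; intro h; simpa using hIcc h
  -- derivative facts
  have hdiff : ∀ t ∈ Ioi (0:ℝ), HasDerivAt f (deriv f t) t := fun t ht =>
    ((hder.differentiableOn one_ne_zero).differentiableAt (Ioi_mem_nhds ht)).hasDerivAt
  have hcd : ContinuousOn (deriv f) (Ioi 0) :=
    hder.continuousOn_deriv_of_isOpen isOpen_Ioi le_rfl
  have hcf : ContinuousOn f (Ioi 0) := hder.continuousOn
  -- tangent line inequality
  have tangent : ∀ m ∈ Ioi (0:ℝ), ∀ t ∈ Ioi (0:ℝ),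
      f m + deriv f m * (t - m) ≤ f t := by
    intro m hm t ht
    rcases lt_trichotomy m t with h | rfl | h
    · have hs := hconv.deriv_le_slope hm ht h ((hdiff m hm)).differentiableAt
      rw [slope_def_field] at hs
      have h' : 0 < t - m := by linarith
      have := (le_div_iff₀ h').mp hs
      linarith
    · simp
    · have hs := hconv.slope_le_deriv ht hm h ((hdiff m hm)).differentiableAt
      rw [slope_def_field] at hs
      have h' : 0 < m - t := by linarith
      have := (div_le_iff₀ h').mp hs
      linarith
  -- nonnegativity of the derivative
  have hder_nonneg : ∀ m ∈ Ioi (0:ℝ), 0 ≤ deriv f m := by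
    intro m hm
    have hm' : (0:ℝ) < m := hm
    have h2 : m/2 ∈ Ioi (0:ℝ) := by simp only [mem_Ioi]; linarith
    have ht := tangent m hm (m/2) h2
    have hlt : f (m/2) < f m := hmono h2 hm (by linarith)
    nlinarith
  -- continuity of integrands
  have hct_w : ContinuousOn (fun t : ℝ => t ^ (p-1)) (Icc y x) := fun t ht =>
    (Real.continuousAt_rpow_const t (p-1) (Or.inl (hIcc ht).ne')).continuousWithinAt
  have hct_v : ContinuousOn (fun t : ℝ => t ^ p) (Icc y x) := fun t ht =>
    (Real.continuousAt_rpow_const t p (Or.inl (hIcc ht).ne')).continuousWithinAt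
  have hct_h : ContinuousOn (fun t => f t ^ (p-1) * deriv f t) (Icc y x) :=
    (((hcf.mono hIcc).rpow_const fun t ht => Or.inl (hpos t (hIcc ht)).ne').mul
      (hcd.mono hIcc))
  have hct_fh : ContinuousOn (fun t => f t ^ p * deriv f t) (Icc y x) :=
    (((hcf.mono hIcc).rpow_const fun t ht => Or.inl (hpos t (hIcc ht)).ne').mul
      (hcd.mono hIcc))
  -- integrability
  have hiw : IntervalIntegrable (fun t : ℝ => t ^ (p-1)) MeasureTheory.volume y x :=
    (huIcc ▸ hct_w).intervalIntegrable
  have hiv : IntervalIntegrable (fun t : ℝ => t ^ p) MeasureTheory.volume y x :=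
    (huIcc ▸ hct_v).intervalIntegrable
  have hih : IntervalIntegrable (fun t => f t ^ (p-1) * deriv f t) MeasureTheory.volume y x :=
    (huIcc ▸ hct_h).intervalIntegrable
  have hifh : IntervalIntegrable (fun t => f t ^ p * deriv f t) MeasureTheory.volume y x :=
    (huIcc ▸ hct_fh).intervalIntegrable
  -- closed forms of the integrals
  have hA : ∫ t in y..x, t ^ p = (x ^ (p+1) - y ^ (p+1)) / (p+1) :=
    integral_rpow (Or.inr ⟨hpm, h0⟩)
  have hB : ∫ t in y..x, t ^ (p-1) = (x ^ p - y ^ p) / p := by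
    have := integral_rpow (a := y) (b := x) (r := p - 1)
      (Or.inr ⟨fun h => hp0 (by linarith), h0⟩)
    rw [show p - 1 + 1 = p by ring] at this
    exact this
  have hC : ∫ t in y..x, f t ^ p * deriv f t = (f x ^ (p+1) - f y ^ (p+1)) / (p+1) := by
    rw [integral_eq_sub_of_hasDerivAt (f := fun u => f u ^ (p+1) / (p+1)) ?_ hifh]
    · ring
    · intro t ht
      rw [huIcc] at ht
      have ht' := hIcc ht
      have h1 := ((hdiff t ht').rpow_const (p := p+1) (Or.inl (hpos t ht').ne')).div_const (p+1)
      rw [show p + 1 - 1 = p by ring] at h1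
      convert h1 using 1
      rfl
      field_simp
  have hD : ∫ t in y..x, f t ^ (p-1) * deriv f t = (f x ^ p - f y ^ p) / p := by
    rw [integral_eq_sub_of_hasDerivAt (f := fun u => f u ^ p / p) ?_ hih]
    · ring
    · intro t ht
      rw [huIcc] at ht
      have ht' := hIcc ht
      have h1 := ((hdiff t ht').rpow_const (p := p) (Or.inl (hpos t ht').ne')).div_const p
      convert h1 using 1
      rfl
      field_simp
  -- positivity of denominators
  have hfxy : f y < f x := hmono (mem_Ioi.2 hy) (mem_Ioi.2 hx) hxy
  have rpd : ∀ a b : ℝ, 0 < b → b < a → 0 < (a ^ p - b ^ p) / p := by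
    intro a b hb hba
    rcases hp0.lt_or_gt with hneg | hposp
    · have : a ^ p < b ^ p := Real.rpow_lt_rpow_of_neg hb hba hneg
      exact div_pos_of_neg_of_neg (by linarith) hneg
    · have : b ^ p < a ^ p := Real.rpow_lt_rpow hb.le hba hposp
      exact div_pos (by linarith) hposp
  have hBpos : 0 < (x ^ p - y ^ p) / p := rpd x y hy hxy
  have hDpos : 0 < (f x ^ p - f y ^ p) / p := rpd (f x) (f y) (hpos y hy) hfxy
  have hBne : x ^ p - y ^ p ≠ 0 := by
    intro h; rw [h] at hBpos; simp at hBpos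
  have hDne : f x ^ p - f y ^ p ≠ 0 := by
    intro h; rw [h] at hDpos; simp at hDpos
  -- the means as ratios
  set m : ℝ := ((x ^ (p+1) - y ^ (p+1)) / (p+1)) / ((x ^ p - y ^ p) / p) with hm_def
  have halzer_m : alzer p x y = m := by
    rw [hm_def]; unfold alzer; field_simp
  have halzer_a : alzer p (f x) (f y)
      = ((f x ^ (p+1) - f y ^ (p+1)) / (p+1)) / ((f x ^ p - f y ^ p) / p) := by
    unfold alzer; field_simp
  -- m ≥ y
  have hym : y ≤ m := by
    have hptws : ∀ t ∈ Icc y x, y * t ^ (p-1) ≤ t ^ p := by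
      intro t ht
      have ht0 : (0:ℝ) < t := hIcc ht
      calc y * t ^ (p-1) ≤ t * t ^ (p-1) :=
            mul_le_mul_of_nonneg_right ht.1 (Real.rpow_nonneg ht0.le _)
        _ = t ^ p := by
            rw [show p = p - 1 + 1 by ring, Real.rpow_add_one ht0.ne']; ring
    have hint := integral_mono_on hxy.le (hiw.const_mul y) hiv hptws
    rw [integral_const_mul, hA, hB] at hint
    rw [hm_def, le_div_iff₀ hBpos]
    linarith
  have hm0 : m ∈ Ioi (0:ℝ) := mem_Ioi.2 (lt_of_lt_of_le hy hym)
  -- m ≤ (x+y)/2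
  have hmc : m ≤ (x + y) / 2 := by
    set c : ℝ := (x + y) / 2 with hc_def
    have hc0 : (0:ℝ) < c := by rw [hc_def]; linarith
    have hptws : ∀ t ∈ Icc y x, t ^ p ≤ c * t ^ (p-1) + c ^ (p-1) * (t - c) := by
      intro t ht
      have ht0 : (0:ℝ) < t := hIcc ht
      have hid : t ^ p = t * t ^ (p-1) := by
        rw [show p = p - 1 + 1 by ring, Real.rpow_add_one ht0.ne']; ring
      rcases le_total t c with hle | hle
      · have hr : c ^ (p-1) ≤ t ^ (p-1) :=
          Real.rpow_le_rpow_of_nonpos ht0 hle (by linarith)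
        nlinarith
      · have hr : t ^ (p-1) ≤ c ^ (p-1) :=
          Real.rpow_le_rpow_of_nonpos hc0 hle (by linarith)
        nlinarith
    have hint := integral_mono_on hxy.le hiv
      ((hiw.const_mul c).add ((intervalIntegrable_id.sub
        (_root_.intervalIntegrable_const (μ := MeasureTheory.volume) (c := c))).const_mul (c ^ (p-1)))) hptws
    rw [integral_add (hiw.const_mul c) ((intervalIntegrable_id.sub
        (_root_.intervalIntegrable_const (μ := MeasureTheory.volume) (c := c))).const_mul (c ^ (p-1))),
      integral_const_mul, integral_const_mul,
      integral_sub intervalIntegrable_id (_root_.intervalIntegrable_const (μ := MeasureTheory.volume) (c := _)),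
      integral_id, integral_const, hA, hB] at hint
    have hz : c ^ (p-1) * ((x ^ 2 - y ^ 2) / 2 - (x - y) • c) = 0 := by
      rw [hc_def]; rw [smul_eq_mul]; ring
    rw [hz] at hint
    rw [hm_def, div_le_iff₀ hBpos]
    linarith
  -- main estimate
  have hfm0 : 0 < f m := hpos m hm0
  have hK : 0 ≤ f m ^ (p-1) * deriv f m * deriv f m :=
    mul_nonneg (mul_nonneg (Real.rpow_nonneg hfm0.le _) (hder_nonneg m hm0))
      (hder_nonneg m hm0)
  have hptws : ∀ t ∈ Icc y x,
      f m ^ (p-1) * deriv f m * deriv f m * (t - m)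
        ≤ f t ^ p * deriv f t - f m * (f t ^ (p-1) * deriv f t) := by
    intro t ht
    have ht0 : t ∈ Ioi (0:ℝ) := hIcc ht
    have hid : f t ^ p = f t * f t ^ (p-1) := by
      rw [show p = p - 1 + 1 by ring, Real.rpow_add_one (hpos t ht0).ne']; ring
    have htan := tangent m hm0 t ht0
    have hHm : 0 ≤ f m ^ (p-1) * deriv f m :=
      mul_nonneg (Real.rpow_nonneg hfm0.le _) (hder_nonneg m hm0)
    -- step 1: (f t - f m) * h t ≥ (f t - f m) * h m
    have step1 : (f t - f m) * (f m ^ (p-1) * deriv f m)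
        ≤ (f t - f m) * (f t ^ (p-1) * deriv f t) := by
      rcases le_total m t with hle | hle
      · have hfle : f m ≤ f t := hmono.monotoneOn hm0 ht0 hle
        have hhle : f m ^ (p-1) * deriv f m ≤ f t ^ (p-1) * deriv f t :=
          hinc hm0 ht0 hle
        exact mul_le_mul_of_nonneg_left hhle (by linarith)
      · have hfle : f t ≤ f m := hmono.monotoneOn ht0 hm0 hle
        have hhle : f t ^ (p-1) * deriv f t ≤ f m ^ (p-1) * deriv f m :=
          hinc ht0 hm0 hle
        exact mul_le_mul_of_nonpos_left hhle (by linarith)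
    -- step 2: tangent
    have step2 : deriv f m * (t - m) * (f m ^ (p-1) * deriv f m)
        ≤ (f t - f m) * (f m ^ (p-1) * deriv f m) :=
      mul_le_mul_of_nonneg_right (by linarith) hHm
    rw [hid]
    nlinarith [step1, step2]
  have hint := integral_mono_on hxy.le
    (((intervalIntegrable_id.sub (_root_.intervalIntegrable_const (μ := MeasureTheory.volume) (c := m))).const_mul
      (f m ^ (p-1) * deriv f m * deriv f m)))
    (hifh.sub (hih.const_mul (f m))) hptws
  rw [integral_const_mul,
    integral_sub intervalIntegrable_id (_root_.intervalIntegrable_const (μ := MeasureTheory.volume) (c := _)), integral_id,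
    integral_const, integral_sub hifh (hih.const_mul (f m)), integral_const_mul,
    hC, hD] at hint
  have hlhs : 0 ≤ f m ^ (p-1) * deriv f m * deriv f m *
      ((x ^ 2 - y ^ 2) / 2 - (x - y) • m) := by
    rw [smul_eq_mul]
    apply mul_nonneg hK
    nlinarith [hmc, hxy]
  have hmain : f m * ((f x ^ p - f y ^ p) / p) ≤ (f x ^ (p+1) - f y ^ (p+1)) / (p+1) := by
    linarith
  rw [ge_iff_le, halzer_m, halzer_a, le_div_iff₀ hDpos]
  linarith

/-- Let `p ≤ 1`, `p ∉ {0,-1}`. If `f : (0,∞) → (0,∞)` is continuously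
differentiable, strictly increasing and convex, and `x ↦ f(x)^(p-1) * f'(x)`
is increasing, then `J_p(f(x), f(y)) ≥ f(J_p(x,y))` for distinct `x, y > 0`. -/
theorem alzer_ge_of_convex (p : ℝ) (hp1 : p ≤ 1) (hp0 : p ≠ 0) (hpm : p ≠ -1)
    (f : ℝ → ℝ)
    (hpos : ∀ x ∈ Ioi (0 : ℝ), 0 < f x)
    (hder : ContDiffOn ℝ 1 f (Ioi 0))
    (hmono : StrictMonoOn f (Ioi 0))
    (hconv : ConvexOn ℝ (Ioi 0) f)
    (hinc : MonotoneOn (fun x => f x ^ (p - 1) * deriv f x) (Ioi 0)) :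
    ∀ x ∈ Ioi (0 : ℝ), ∀ y ∈ Ioi (0 : ℝ), x ≠ y →
      alzer p (f x) (f y) ≥ f (alzer p x y) := by
  intro x hx y hy hne
  rcases hne.lt_or_gt with h | h
  · rw [alzer_comm p (f x) (f y), alzer_comm p x y]
    exact alzer_key p hp1 hp0 hpm f hpos hder hmono hconv hinc y x hx h
  · exact alzer_key p hp1 hp0 hpm f hpos hder hmono hconv hinc x y hy h
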